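/- For all natural numbers N and all m ≤ N, 2 · ∑_{i=0}^{2} (−1)^i · C(N−m,i) · C(m,2−i) = (N − 2m)^2 − N, as an identity of integers (with N − 2m computed in ℤ). -/
import Mathlib

lemma two_mul_choose_two (n : ℕ) : (2 : ℤ) * n.choose 2 = n ^ 2 - n := by
  induction n with
  | zero => simp
  | succ k ih =>
    rw [Nat.choose_succ_succ]
    push_cast [Nat.choose_one_right]
    ring_nf
    ring_nf at ih
    linarith

/-- Twice the two-body Ising eigenvalue: `2 λ_{N,2}(m) = (N - 2m)^2 - N` in `ℤ`. -/
theorem two_mul_isingEigenvalue_two_body (N m : ℕ) (hm : m ≤ N) :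
    2 * ∑ i ∈ Finset.range 3, (-1 : ℤ) ^ i * ((N - m).choose i) * (m.choose (2 - i)) =
      ((N : ℤ) - 2 * m) ^ 2 - N := by
  obtain ⟨k, rfl⟩ := Nat.exists_eq_add_of_le hm
  simp only [Finset.sum_range_succ, Finset.sum_range_zero, Nat.add_sub_cancel_left]
  have h1 := two_mul_choose_two m
  have h2 := two_mul_choose_two k
  push_cast [Nat.choose_one_right, Nat.choose_zero_right]
  ring_nf
  ring_nf at h1 h2
  linarith
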